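/- (Multipolynomial Bohnenblust–Hille inequality, necessity) Let n₁, …, n_m be positive integers, M = n₁ + ⋯ + n_m, and suppose 0 < p is an exponent for which there exists a constant C ≥ 1 such that (Σ |c_{α^{(1)}…α^{(m)}}(P)|^p)^{1/p} ≤ C‖P‖ for all continuous (n₁, …, n_m)-homogeneous polynomials P : c₀ × ⋯ × c₀ → 𝕂. Then p ≥ 2M/(M+1). -/

import Mathlib

/-- Total degree of a finitely supported multi-index. -/
def degOf (α : ℕ →₀ ℕ) : ℕ := α.sum fun _ k => k

/-- Evaluation of the multipolynomial on `c₀ × ⋯ × c₀` with (finitely supported)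
monomial coefficient family `c`:
`P(x⁽¹⁾,…,x⁽ᵐ⁾) = Σ_α c_α (x⁽¹⁾)^{α⁽¹⁾} ⋯ (x⁽ᵐ⁾)^{α⁽ᵐ⁾}`. -/
noncomputable def evalMP {m : ℕ} (c : (Fin m → (ℕ →₀ ℕ)) →₀ ℝ)
    (x : Fin m → ℕ → ℝ) : ℝ :=
  c.sum fun α a => a * ∏ i : Fin m, (α i).prod fun j k => (x i j) ^ k

/-- The sup norm of the multipolynomial with coefficients `c` over the product of
unit balls. -/
noncomputable def mpNorm {m : ℕ} (c : (Fin m → (ℕ →₀ ℕ)) →₀ ℝ) : ℝ :=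
  sSup {y : ℝ | ∃ x : Fin m → ℕ → ℝ, (∀ i j, |x i j| ≤ 1) ∧ y = |evalMP c x|}

/-- The multi-index family attached to a tuple `s`. -/
noncomputable def AA {m : ℕ} (n : Fin m → ℕ) (r : ℕ)
    (s : (i : Fin m) → Fin (n i) → Fin r) : Fin m → (ℕ →₀ ℕ) :=
  fun i => ∑ l : Fin (n i), Finsupp.single ((l : ℕ) * r + (s i l : ℕ)) 1

lemma AA_apply {m : ℕ} (n : Fin m → ℕ) (r : ℕ)
    (s : (i : Fin m) → Fin (n i) → Fin r) (i : Fin m) (a : ℕ) :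
    AA n r s i a = ∑ l : Fin (n i), if (l : ℕ) * r + (s i l : ℕ) = a then 1 else 0 := by
  simp [AA, Finsupp.finset_sum_apply, Finsupp.single_apply]

lemma AA_inj {m : ℕ} (n : Fin m → ℕ) (r : ℕ) :
    Function.Injective (AA (m := m) n r) := by
  intro s s' h
  funext i l
  set a : ℕ := (l : ℕ) * r + (s i l : ℕ) with ha
  have hr : 0 < r := (s i l).pos
  have h1 : AA n r s i a ≠ 0 := by
    rw [AA_apply]
    intro h0
    rw [Finset.sum_eq_zero_iff] at h0
    have := h0 l (Finset.mem_univ l)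
    simp at this
    exact this ha.symm
  rw [h, AA_apply] at h1
  have h2 : ¬ ∀ l' : Fin (n i), l' ∈ Finset.univ → (if (l' : ℕ) * r + (s' i l' : ℕ) = a then 1 else 0) = 0 := by
    intro h0
    exact h1 (Finset.sum_eq_zero h0)
  push_neg at h2
  obtain ⟨l', -, hl'⟩ := h2
  have heq : (l' : ℕ) * r + (s' i l' : ℕ) = a := by
    by_contra hc; simp [hc] at hl'
  have hll : (l' : ℕ) = (l : ℕ) := by
    have e1 : ((l' : ℕ) * r + (s' i l' : ℕ)) / r = (l' : ℕ) := by
      rw [mul_comm, Nat.mul_add_div hr, Nat.div_eq_of_lt (s' i l').isLt, Nat.add_zero]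
    have e2 : ((l : ℕ) * r + (s i l : ℕ)) / r = (l : ℕ) := by
      rw [mul_comm, Nat.mul_add_div hr, Nat.div_eq_of_lt (s i l).isLt, Nat.add_zero]
    rw [← e1, ← e2, heq]
  have hl2 : l' = l := Fin.ext hll
  subst hl2
  have : (s' i l' : ℕ) = (s i l' : ℕ) := by omega
  exact (Fin.ext this).symm

lemma AA_deg {m : ℕ} (n : Fin m → ℕ) (r : ℕ)
    (s : (i : Fin m) → Fin (n i) → Fin r) (i : Fin m) :
    degOf (AA n r s i) = n i := by
  unfold degOf AA
  rw [← Finsupp.sum_finset_sum_index (by simp) (by simp)]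
  simp [Finsupp.sum_single_index]

lemma AA_prod {m : ℕ} (n : Fin m → ℕ) (r : ℕ)
    (s : (i : Fin m) → Fin (n i) → Fin r) (i : Fin m) (x : ℕ → ℝ) :
    ((AA n r s i).prod fun j k => x j ^ k)
      = ∏ l : Fin (n i), x ((l : ℕ) * r + (s i l : ℕ)) := by
  unfold AA
  rw [← Finsupp.prod_finset_sum_index (by simp) (fun a b₁ b₂ => pow_add _ _ _)]
  simp [Finsupp.prod_single_index]
lemma keyLemma {m : ℕ} (n : Fin m → ℕ) (M : ℕ) (hM : M = ∑ i, n i)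
    (p : ℝ) (hp : 0 < p) (C K : ℝ) (hC : 1 ≤ C) (hK : 0 < K) (r : ℕ)
    (ε : ((i : Fin m) → Fin (n i) → Fin r) → ℝ)
    (hε : ∀ s, ε s = 1 ∨ ε s = -1)
    (hεbd : ∀ y : (i : Fin m) → Fin (n i) → ℕ → ℝ, (∀ i l j, |y i l j| ≤ 1) →
      |∑ s : (i : Fin m) → Fin (n i) → Fin r, ε s * ∏ i, ∏ l, y i l (s i l)|
        ≤ K * (r : ℝ) ^ (((M : ℝ) + 1) / 2))
    (hsumming : ∀ c : (Fin m → (ℕ →₀ ℕ)) →₀ ℝ,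
      (∀ α ∈ c.support, ∀ i, degOf (α i) = n i) →
      (∑ α ∈ c.support, |c α| ^ p) ^ (1 / p) ≤ C * mpNorm c) :
    (r : ℝ) ^ ((M : ℝ) / p) ≤ C * (K * (r : ℝ) ^ (((M : ℝ) + 1) / 2)) := by
  classical
  set εF : ((i : Fin m) → Fin (n i) → Fin r) →₀ ℝ := Finsupp.equivFunOnFinite.symm ε with hεF
  set c : (Fin m → (ℕ →₀ ℕ)) →₀ ℝ := Finsupp.mapDomain (AA n r) εF with hc
  have hεF_apply : ∀ s, εF s = ε s := fun s =>
    congrFun (Finsupp.coe_equivFunOnFinite_symm ε) s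
  have hεne : ∀ s, ε s ≠ 0 := by
    intro s; rcases hε s with h | h <;> rw [h] <;> norm_num
  have hsupp : εF.support = Finset.univ := by
    ext s
    simp only [Finsupp.mem_support_iff, hεF_apply, Finset.mem_univ, iff_true]
    exact hεne s
  have hcsupp : c.support = Finset.image (AA n r) Finset.univ := by
    rw [hc, Finsupp.mapDomain_support_of_injective (AA_inj n r), hsupp]
  have hdeg : ∀ α ∈ c.support, ∀ i, degOf (α i) = n i := by
    intro α hα i
    rw [hcsupp, Finset.mem_image] at hα
    obtain ⟨s, -, rfl⟩ := hα
    exact AA_deg n r s i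
  have habs : ∀ s, |c (AA n r s)| = 1 := by
    intro s
    rw [hc, Finsupp.mapDomain_apply (AA_inj n r), hεF_apply]
    rcases hε s with h | h <;> rw [h] <;> norm_num
  have hsum : (∑ α ∈ c.support, |c α| ^ p) = (r : ℝ) ^ (M : ℕ) := by
    rw [hcsupp, Finset.sum_image (fun x _ y _ h => AA_inj n r h)]
    have h1 : ∀ s, |c (AA n r s)| ^ p = 1 := by
      intro s; rw [habs s, Real.one_rpow]
    rw [Finset.sum_congr rfl fun s _ => h1 s, Finset.sum_const, nsmul_eq_mul, mul_one]
    have hcard : Fintype.card ((i : Fin m) → Fin (n i) → Fin r) = r ^ M := by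
      rw [Fintype.card_pi]
      have h2 : ∀ i : Fin m, Fintype.card (Fin (n i) → Fin r) = r ^ n i := by
        intro i; rw [Fintype.card_fun, Fintype.card_fin, Fintype.card_fin]
      rw [Finset.prod_congr rfl fun i _ => h2 i, Finset.prod_pow_eq_pow_sum, hM]
    rw [Finset.card_univ, hcard]
    push_cast
    ring
  have hnorm : mpNorm c ≤ K * (r : ℝ) ^ (((M : ℝ) + 1) / 2) := by
    apply Real.sSup_le
    · rintro y ⟨x, hx, rfl⟩
      have heval : evalMP c x = ∑ s : (i : Fin m) → Fin (n i) → Fin r, ε s *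
          ∏ i, ∏ l : Fin (n i), x i (l.val * r + (s i l).val) := by
        rw [evalMP, hc, Finsupp.sum_mapDomain_index (by intro b; simp)
          (by intro b m₁ m₂; ring)]
        rw [Finsupp.sum, hsupp]
        refine Finset.sum_congr rfl fun s _ => ?_
        rw [hεF_apply]
        congr 1
        refine Finset.prod_congr rfl fun i _ => ?_
        exact AA_prod n r s i (x i)
      rw [heval]
      exact hεbd (fun i l j => x i (l.val * r + j)) (fun i l j => hx i _)
    · positivity
  have hmain := hsumming c hdeg
  rw [hsum] at hmain
  have hstep : ((r : ℝ) ^ (M : ℕ)) ^ (1 / p) = (r : ℝ) ^ ((M : ℝ) / p) := by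
    rw [← Real.rpow_natCast (r : ℝ) M, ← Real.rpow_mul (by positivity)]
    congr 1
    field_simp
  rw [hstep] at hmain
  calc (r : ℝ) ^ ((M : ℝ) / p) ≤ C * mpNorm c := hmain
    _ ≤ C * (K * (r : ℝ) ^ (((M : ℝ) + 1) / 2)) :=
        mul_le_mul_of_nonneg_left hnorm (by linarith)


/-- Multipolynomial Bohnenblust–Hille inequality (necessity): if an exponent
`p > 0` works for all `(n₁,…,n_m)`-homogeneous multipolynomials on `c₀ × ⋯ × c₀`,
then `p ≥ 2M/(M+1)` where `M = n₁ + ⋯ + n_m`. The Kahane–Salem–Zygmund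
inequality is taken as a hypothesis. -/
theorem stmt17 (m : ℕ) (hm : 0 < m) (n : Fin m → ℕ) (hn : ∀ i, 0 < n i)
    (M : ℕ) (hM : M = ∑ i, n i) (p : ℝ) (hp : 0 < p) (C : ℝ) (hC : 1 ≤ C)
    (hKSZ : ∃ K : ℝ, 0 < K ∧ ∀ r : ℕ,
      ∃ ε : ((i : Fin m) → Fin (n i) → Fin r) → ℝ,
        (∀ s, ε s = 1 ∨ ε s = -1) ∧
        ∀ y : (i : Fin m) → Fin (n i) → ℕ → ℝ, (∀ i l j, |y i l j| ≤ 1) →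
          |∑ s : (i : Fin m) → Fin (n i) → Fin r,
              ε s * ∏ i, ∏ l, y i l (s i l)|
            ≤ K * (r : ℝ) ^ (((M : ℝ) + 1) / 2))
    (hsumming : ∀ c : (Fin m → (ℕ →₀ ℕ)) →₀ ℝ,
      (∀ α ∈ c.support, ∀ i, degOf (α i) = n i) →
      (∑ α ∈ c.support, |c α| ^ p) ^ (1 / p) ≤ C * mpNorm c) :
    p ≥ 2 * M / (M + 1) := by
  classical
  obtain ⟨K, hK, hKSZ⟩ := hKSZ
  have key : ∀ r : ℕ, (r : ℝ) ^ ((M : ℝ) / p)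
      ≤ C * (K * (r : ℝ) ^ (((M : ℝ) + 1) / 2)) := by
    intro r
    obtain ⟨ε, hε, hεbd⟩ := hKSZ r
    exact keyLemma n M hM p hp C K hC hK r ε hε hεbd hsumming
  by_contra hlt
  push_neg at hlt
  have hM1 : 1 ≤ M := by
    subst hM
    calc 1 ≤ n ⟨0, hm⟩ := hn _
      _ ≤ ∑ i, n i := Finset.single_le_sum (fun i _ => Nat.zero_le _) (Finset.mem_univ _)
  have hMpos : (0 : ℝ) < M := by exact_mod_cast hM1
  have h1 : p * ((M : ℝ) + 1) < 2 * M := (lt_div_iff₀ (by positivity)).mp hlt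
  set q : ℝ := ((M : ℝ) + 1) / 2 with hq
  have hqlt : q < (M : ℝ) / p := by
    rw [hq, div_lt_div_iff₀ two_pos hp]
    nlinarith
  set t : ℝ := (M : ℝ) / p - q with htdef
  have htpos : 0 < t := by simp only [htdef, sub_pos]; exact hqlt
  have hCK : 0 < C * K := by positivity
  obtain ⟨r, hr⟩ := exists_nat_gt (max 1 ((C * K) ^ (1 / t)))
  have hr1 : (1 : ℝ) < (r : ℝ) := lt_of_le_of_lt (le_max_left _ _) hr
  have hr0 : (0 : ℝ) < (r : ℝ) := by linarith
  have hrCK : (C * K) ^ (1 / t) < (r : ℝ) := lt_of_le_of_lt (le_max_right _ _) hr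
  have hkey := key r
  have hsplit : (r : ℝ) ^ ((M : ℝ) / p) = (r : ℝ) ^ t * (r : ℝ) ^ q := by
    rw [← Real.rpow_add hr0]
    congr 1
    simp [htdef]
  rw [hsplit] at hkey
  have hqpos : (0 : ℝ) < (r : ℝ) ^ q := Real.rpow_pos_of_pos hr0 q
  have h3 : (r : ℝ) ^ t * (r : ℝ) ^ q ≤ (C * K) * (r : ℝ) ^ q := by
    calc (r : ℝ) ^ t * (r : ℝ) ^ q ≤ C * (K * (r : ℝ) ^ q) := hkey
      _ = (C * K) * (r : ℝ) ^ q := by ring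
  have hrt : (r : ℝ) ^ t ≤ C * K := le_of_mul_le_mul_right h3 hqpos
  have hgt : C * K < (r : ℝ) ^ t := by
    have h2 : ((C * K) ^ (1 / t)) ^ t < (r : ℝ) ^ t :=
      Real.rpow_lt_rpow (Real.rpow_nonneg hCK.le _) hrCK htpos
    rwa [← Real.rpow_mul hCK.le, one_div, inv_mul_cancel₀ (ne_of_gt htpos),
      Real.rpow_one] at h2
  linarith
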